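/- Let 1/2 < β < 1, k ≥ 1 an integer, and set p = −β + (k−1)(1−2β)/2 and q = −β + k(1−2β)/2. Suppose u_i ≤ C·i^{p} and θ_i ≤ C·i^{q} for i ≥ 1. If k(2β−1) < 1, then ∑_{i=1}^∞ u_i·θ_{i+h} = O(h^{(k+1/2)(1−2β)}) as h → ∞, which is o(h^{k(1−2β)}). -/

import Mathlib

open Real Finset Filter

lemma tangentA {d : ℝ} (hd0 : 0 < d) (hd1 : d ≤ 1) {x : ℝ} (hx : 0 ≤ x) :
    d * (x + 1) ^ (d - 1) ≤ (x + 1) ^ d - x ^ d := by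
  have hx1 : (0:ℝ) < x + 1 := by linarith
  have hs : (-1 : ℝ) ≤ -(1 / (x + 1)) := by
    have : 1 / (x + 1) ≤ 1 := by
      rw [div_le_one hx1]; linarith
    linarith
  have hB := rpow_one_add_le_one_add_mul_self hs hd0.le hd1
  have h1 : 1 + -(1 / (x + 1)) = x / (x + 1) := by field_simp; ring
  rw [h1] at hB
  have hxd : x ^ d = (x + 1) ^ d * (x / (x + 1)) ^ d := by
    rw [← Real.mul_rpow hx1.le (by positivity)]
    congr 1; field_simp
  have h2 : (x + 1) ^ d * (x / (x + 1)) ^ d ≤ (x + 1) ^ d * (1 + d * -(1 / (x + 1))) :=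
    mul_le_mul_of_nonneg_left hB (by positivity)
  have h3 : (x + 1) ^ d * (1 + d * -(1 / (x + 1))) = (x + 1) ^ d - d * (x + 1) ^ (d - 1) := by
    rw [Real.rpow_sub_one hx1.ne']
    field_simp; ring
  nlinarith [hxd, h2, h3]

lemma bern_neg {c t : ℝ} (hc : c < 0) (ht0 : 0 < t) (ht : t ≤ 1 / 2) :
    1 - c * t ≤ (1 - t) ^ c := by
  have h1t : (0:ℝ) < 1 - t := by linarith
  rcases le_or_gt (-1) c with hcase | hcase
  · have hB := rpow_one_add_le_one_add_mul_self (s := -t) (p := -c)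
      (by linarith) (by linarith) (by linarith)
    have h1 : (1 : ℝ) + -t = 1 - t := by ring
    rw [h1] at hB
    have hct : (0:ℝ) < 1 + -c * -t := by nlinarith
    have hpos : (0:ℝ) < (1 - t) ^ (-c) := Real.rpow_pos_of_pos h1t _
    have hinv : (1 + -c * -t)⁻¹ ≤ ((1 - t) ^ (-c))⁻¹ :=
      inv_anti₀ hpos hB
    have heq : ((1 - t) ^ (-c))⁻¹ = (1 - t) ^ c := by
      rw [← Real.rpow_neg h1t.le, neg_neg]
    rw [heq] at hinv
    refine le_trans ?_ hinv
    rw [← one_div, le_div_iff₀ hct]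
    nlinarith [sq_nonneg (c * t)]
  · have hs : (0:ℝ) ≤ t / (1 - t) := by positivity
    have hB := one_add_mul_self_le_rpow_one_add (s := t / (1 - t)) (p := -c)
      (by linarith) (by linarith)
    have h1 : (1 : ℝ) + t / (1 - t) = (1 - t)⁻¹ := by field_simp; ring
    rw [h1] at hB
    have heq : ((1 - t)⁻¹) ^ (-c) = (1 - t) ^ c := by
      rw [Real.inv_rpow h1t.le, ← Real.rpow_neg h1t.le, neg_neg]
    rw [heq] at hB
    refine le_trans ?_ hB
    have htt : t ≤ t / (1 - t) := by
      rw [le_div_iff₀ h1t]; nlinarith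
    nlinarith

lemma tangentB {c : ℝ} (hc : c < 0) {x : ℝ} (hx : 1 ≤ x) :
    -c * (x + 1) ^ (c - 1) ≤ x ^ c - (x + 1) ^ c := by
  have hx0 : (0:ℝ) < x := by linarith
  have hx1 : (0:ℝ) < x + 1 := by linarith
  have ht0 : (0:ℝ) < 1 / (x + 1) := by positivity
  have ht : 1 / (x + 1) ≤ 1 / 2 := by
    rw [div_le_div_iff₀ hx1 two_pos]; linarith
  have hB := bern_neg hc ht0 ht
  have h1 : 1 - 1 / (x + 1) = x / (x + 1) := by field_simp; ring
  rw [h1] at hB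
  have hxd : x ^ c = (x + 1) ^ c * (x / (x + 1)) ^ c := by
    rw [← Real.mul_rpow hx1.le (by positivity)]
    congr 1; field_simp
  have h2 : (x + 1) ^ c * (1 - c * (1 / (x + 1))) ≤ (x + 1) ^ c * (x / (x + 1)) ^ c :=
    mul_le_mul_of_nonneg_left hB (Real.rpow_nonneg hx1.le _)
  have h3 : (x + 1) ^ c * (1 - c * (1 / (x + 1))) = (x + 1) ^ c - c * (x + 1) ^ (c - 1) := by
    rw [Real.rpow_sub_one hx1.ne']
    field_simp
  nlinarith [hxd, h2, h3]

lemma sumA {p : ℝ} (hp0 : -1 < p) (hp1 : p ≤ 0) (n : ℕ) :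
    ∑ i ∈ Finset.range n, ((i : ℝ) + 1) ^ p ≤ (n : ℝ) ^ (p + 1) / (p + 1) := by
  have hd0 : (0:ℝ) < p + 1 := by linarith
  rw [le_div_iff₀ hd0]
  calc (∑ i ∈ Finset.range n, ((i : ℝ) + 1) ^ p) * (p + 1)
      = ∑ i ∈ Finset.range n, (p + 1) * ((i:ℝ) + 1) ^ ((p + 1) - 1) := by
        rw [Finset.sum_mul]
        exact Finset.sum_congr rfl fun i _ => by rw [mul_comm]; norm_num
    _ ≤ ∑ i ∈ Finset.range n, (((i:ℝ) + 1) ^ (p + 1) - (i:ℝ) ^ (p + 1)) :=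
        Finset.sum_le_sum fun i _ => tangentA hd0 (by linarith) (Nat.cast_nonneg i)
    _ = ∑ i ∈ Finset.range n,
          ((fun j : ℕ => (j : ℝ) ^ (p + 1)) (i + 1) - (fun j : ℕ => (j : ℝ) ^ (p + 1)) i) := by
        apply Finset.sum_congr rfl; intro i _; push_cast; ring
    _ = (n : ℝ) ^ (p + 1) - ((0:ℕ) : ℝ) ^ (p + 1) :=
        Finset.sum_range_sub (fun j : ℕ => (j : ℝ) ^ (p + 1)) n
    _ ≤ (n : ℝ) ^ (p + 1) := by
        simp [Real.zero_rpow hd0.ne']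

lemma sumB {e : ℝ} (he : e + 1 < 0) {h : ℕ} (hh : 1 ≤ h) (n : ℕ) :
    ∑ i ∈ Finset.Ico h n, ((i : ℝ) + 1) ^ e ≤ (h : ℝ) ^ (e + 1) / (-(e + 1)) := by
  have hnc : (0:ℝ) < -(e + 1) := by linarith
  have hhr : (0:ℝ) < (h:ℝ) := by exact_mod_cast hh
  rcases le_or_gt n h with hn | hn
  · rw [Finset.Ico_eq_empty (by omega)]
    simp only [Finset.sum_empty]
    positivity
  rw [le_div_iff₀ hnc]
  calc (∑ i ∈ Finset.Ico h n, ((i : ℝ) + 1) ^ e) * (-(e + 1))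
      = ∑ i ∈ Finset.Ico h n, (-(e + 1)) * ((i:ℝ) + 1) ^ ((e + 1) - 1) := by
        rw [Finset.sum_mul]
        exact Finset.sum_congr rfl fun i _ => by rw [mul_comm]; norm_num
    _ ≤ ∑ i ∈ Finset.Ico h n, ((i:ℝ) ^ (e + 1) - ((i:ℝ) + 1) ^ (e + 1)) := by
        refine Finset.sum_le_sum fun i hi => ?_
        have h1i : (1:ℝ) ≤ (i:ℝ) := by
          have := (Finset.mem_Ico.mp hi).1
          exact_mod_cast le_trans hh this
        exact tangentB he h1i
    _ = ∑ i ∈ Finset.Ico h n,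
          ((fun j : ℕ => (j : ℝ) ^ (e + 1)) i - (fun j : ℕ => (j : ℝ) ^ (e + 1)) (i + 1)) := by
        apply Finset.sum_congr rfl; intro i _; push_cast; ring
    _ = (∑ i ∈ Finset.range n,
          ((fun j : ℕ => (j : ℝ) ^ (e + 1)) i - (fun j : ℕ => (j : ℝ) ^ (e + 1)) (i + 1)))
        - ∑ i ∈ Finset.range h,
          ((fun j : ℕ => (j : ℝ) ^ (e + 1)) i - (fun j : ℕ => (j : ℝ) ^ (e + 1)) (i + 1)) :=
        Finset.sum_Ico_eq_sub _ hn.le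
    _ = (h : ℝ) ^ (e + 1) - (n : ℝ) ^ (e + 1) := by
        rw [Finset.sum_range_sub' (fun j : ℕ => (j : ℝ) ^ (e + 1)) n,
          Finset.sum_range_sub' (fun j : ℕ => (j : ℝ) ^ (e + 1)) h]
        ring
    _ ≤ (h : ℝ) ^ (e + 1) := by
        have : (0:ℝ) ≤ (n : ℝ) ^ (e + 1) := Real.rpow_nonneg (Nat.cast_nonneg n) _
        linarith
theorem mixed_covariance_bound (β : ℝ) (hβ1 : 1 / 2 < β) (hβ2 : β < 1)
    (k : ℕ) (hk : 1 ≤ k) (hkβ : (k : ℝ) * (2 * β - 1) < 1)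
    (u θ : ℕ → ℝ) (hu0 : ∀ i, 0 ≤ u i) (hθ0 : ∀ i, 0 ≤ θ i) (C : ℝ)
    (hu : ∀ i : ℕ, 1 ≤ i → u i ≤ C * (i : ℝ) ^ (-β + ((k : ℝ) - 1) * (1 - 2 * β) / 2))
    (hθ : ∀ i : ℕ, 1 ≤ i → θ i ≤ C * (i : ℝ) ^ (-β + (k : ℝ) * (1 - 2 * β) / 2)) :
    (∃ C' : ℝ, 0 < C' ∧ ∀ h : ℕ, 1 ≤ h →
        ∑' i : ℕ, u (i + 1) * θ (i + 1 + h) ≤ C' * (h : ℝ) ^ (((k : ℝ) + 1 / 2) * (1 - 2 * β))) ∧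
      Filter.Tendsto
        (fun h : ℕ =>
          (h : ℝ) ^ (((k : ℝ) + 1 / 2) * (1 - 2 * β)) / (h : ℝ) ^ ((k : ℝ) * (1 - 2 * β)))
        Filter.atTop (nhds 0) := by
  have hk1 : (1:ℝ) ≤ (k:ℝ) := by exact_mod_cast hk
  set p : ℝ := -β + ((k : ℝ) - 1) * (1 - 2 * β) / 2 with hpdef
  set q : ℝ := -β + (k : ℝ) * (1 - 2 * β) / 2 with hqdef
  have hks : -1 < (k:ℝ) * (1 - 2 * β) := by nlinarith
  have hp0 : -1 < p := by rw [hpdef]; nlinarith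
  have hp1 : p ≤ 0 := by rw [hpdef]; nlinarith
  have hq : q < 0 := by rw [hqdef]; nlinarith
  have hc : p + q + 1 < 0 := by rw [hpdef, hqdef]; nlinarith
  have hE : ((k : ℝ) + 1 / 2) * (1 - 2 * β) = p + q + 1 := by
    rw [hpdef, hqdef]; ring
  have hC : 0 ≤ C := by
    have h1 := hu 1 le_rfl
    rw [Nat.cast_one, Real.one_rpow, mul_one] at h1
    exact le_trans (hu0 1) h1
  constructor
  · -- main bound
    set K : ℝ := 1 / (p + 1) + 1 / (-(p + q + 1)) with hKdef
    have hK : 0 < K := by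
      rw [hKdef]
      have : (0:ℝ) < p + 1 := by linarith
      have : (0:ℝ) < -(p + q + 1) := by linarith
      positivity
    refine ⟨(C ^ 2 + 1) * K, by positivity, fun h hh => ?_⟩
    have hhr : (0:ℝ) < (h:ℝ) := by exact_mod_cast hh
    have hrE : (0:ℝ) < (h:ℝ) ^ (((k : ℝ) + 1 / 2) * (1 - 2 * β)) := Real.rpow_pos_of_pos hhr _
    apply Real.tsum_le_of_sum_range_le (fun i => mul_nonneg (hu0 _) (hθ0 _))
    intro n
    have step1 : ∑ i ∈ Finset.range n, u (i + 1) * θ (i + 1 + h) ≤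
        C ^ 2 * ∑ i ∈ Finset.range n, ((i:ℝ) + 1) ^ p * ((i:ℝ) + 1 + (h:ℝ)) ^ q := by
      rw [Finset.mul_sum]
      refine Finset.sum_le_sum fun i _ => ?_
      have hui := hu (i + 1) (by omega)
      have hθi := hθ (i + 1 + h) (by omega)
      have e1 : ((i + 1 : ℕ) : ℝ) = (i:ℝ) + 1 := by push_cast; ring
      have e2 : ((i + 1 + h : ℕ) : ℝ) = (i:ℝ) + 1 + (h:ℝ) := by push_cast; ring
      rw [e1] at hui; rw [e2] at hθi
      calc u (i + 1) * θ (i + 1 + h)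
          ≤ (C * ((i:ℝ) + 1) ^ p) * (C * ((i:ℝ) + 1 + (h:ℝ)) ^ q) := by
            apply mul_le_mul hui hθi (hθ0 _)
            exact mul_nonneg hC (Real.rpow_nonneg (by positivity) _)
        _ = C ^ 2 * (((i:ℝ) + 1) ^ p * ((i:ℝ) + 1 + (h:ℝ)) ^ q) := by ring
    have step2 : ∑ i ∈ Finset.range n, ((i:ℝ) + 1) ^ p * ((i:ℝ) + 1 + (h:ℝ)) ^ q ≤
        K * (h:ℝ) ^ (p + q + 1) := by
      calc ∑ i ∈ Finset.range n, ((i:ℝ) + 1) ^ p * ((i:ℝ) + 1 + (h:ℝ)) ^ q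
          ≤ ∑ i ∈ Finset.range n,
            (if i < h then ((i:ℝ) + 1) ^ p * (h:ℝ) ^ q else ((i:ℝ) + 1) ^ (p + q)) := by
            refine Finset.sum_le_sum fun i _ => ?_
            have hip : (0:ℝ) < (i:ℝ) + 1 := by positivity
            by_cases hih : i < h
            · rw [if_pos hih]
              refine mul_le_mul_of_nonneg_left ?_ (Real.rpow_nonneg hip.le _)
              exact Real.rpow_le_rpow_of_nonpos hhr (by linarith) hq.le
            · rw [if_neg hih, Real.rpow_add hip p q]
              refine mul_le_mul_of_nonneg_left ?_ (Real.rpow_nonneg hip.le _)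
              exact Real.rpow_le_rpow_of_nonpos hip (by linarith) hq.le
        _ = (∑ i ∈ (Finset.range n).filter (fun i => i < h), ((i:ℝ) + 1) ^ p * (h:ℝ) ^ q)
            + ∑ i ∈ (Finset.range n).filter (fun i => ¬ i < h), ((i:ℝ) + 1) ^ (p + q) :=
            Finset.sum_ite _ _
        _ ≤ (∑ i ∈ Finset.range h, ((i:ℝ) + 1) ^ p * (h:ℝ) ^ q)
            + ∑ i ∈ Finset.Ico h n, ((i:ℝ) + 1) ^ (p + q) := by
            gcongr ?_ + ?_
            · refine Finset.sum_le_sum_of_subset_of_nonneg ?_ fun i _ _ => ?_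
              · intro i hi
                simp only [Finset.mem_filter, Finset.mem_range] at hi ⊢
                exact hi.2
              · exact mul_nonneg (Real.rpow_nonneg (by positivity) _) (Real.rpow_nonneg hhr.le _)
            · refine le_of_eq (Finset.sum_congr ?_ fun _ _ => rfl)
              ext i
              simp only [Finset.mem_filter, Finset.mem_range, Finset.mem_Ico, not_lt]
              omega
        _ ≤ ((h:ℝ) ^ (p + 1) / (p + 1)) * (h:ℝ) ^ q
            + (h:ℝ) ^ ((p + q) + 1) / (-((p + q) + 1)) := by
            gcongr ?_ + ?_
            · calc ∑ i ∈ Finset.range h, ((i:ℝ) + 1) ^ p * (h:ℝ) ^ q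
                  = (∑ i ∈ Finset.range h, ((i:ℝ) + 1) ^ p) * (h:ℝ) ^ q := by
                    rw [Finset.sum_mul]
                _ ≤ ((h:ℝ) ^ (p + 1) / (p + 1)) * (h:ℝ) ^ q :=
                    mul_le_mul_of_nonneg_right (sumA hp0 hp1 h) (Real.rpow_nonneg hhr.le _)
            · exact sumB (by linarith) hh n
        _ = K * (h:ℝ) ^ (p + q + 1) := by
            rw [hKdef, div_mul_eq_mul_div, ← Real.rpow_add hhr]
            ring_nf
    calc ∑ i ∈ Finset.range n, u (i + 1) * θ (i + 1 + h)
        ≤ C ^ 2 * (K * (h:ℝ) ^ (p + q + 1)) :=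
          le_trans step1 (mul_le_mul_of_nonneg_left step2 (by positivity))
      _ ≤ (C ^ 2 + 1) * K * (h:ℝ) ^ (((k : ℝ) + 1 / 2) * (1 - 2 * β)) := by
          rw [hE]
          have hpos : (0:ℝ) < K * (h:ℝ) ^ (p + q + 1) := by
            have := Real.rpow_pos_of_pos hhr (p + q + 1)
            positivity
          nlinarith
  · -- tendsto
    have hexp : (0:ℝ) < (2 * β - 1) / 2 := by linarith
    refine Filter.Tendsto.congr' ?_
      ((tendsto_rpow_neg_atTop hexp).comp tendsto_natCast_atTop_atTop)
    filter_upwards [Filter.eventually_ge_atTop 1] with h hh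
    have hhr : (0:ℝ) < (h:ℝ) := by exact_mod_cast hh
    simp only [Function.comp]
    rw [← Real.rpow_sub hhr]
    congr 1
    ring
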